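/- arXiv:0907.2837 — 3 statements merged into one kernel-verified Lean document; each statement's English description precedes it below -/
import Mathlib

section
/- The fermionic Hamiltonian with periodic boundary conditions satisfies the lattice continuity equation: for every site x in ℤ/LℤL, [H, ρₓ] = −i(Jₓ − J_{x−1}), where ρₓ = a⁺ₓ a⁻ₓ and Jₓ = (1/(2i))(a⁺_{x+1} a⁻ₓ − a⁺ₓ a⁻_{x+1}). -/
open Complex

/-- The local density `ρₓ = a⁺ₓ a⁻ₓ`. -/
noncomputable def rho {L n : ℕ} (ap am : ZMod L → Matrix (Fin n) (Fin n) ℂ) (x : ZMod L) :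
    Matrix (Fin n) (Fin n) ℂ :=
  ap x * am x

/-- The fermionic Hamiltonian with periodic boundary conditions:
`H = -½ Σₓ (a⁺ₓ a⁻ₓ₊₁ + a⁺ₓ₊₁ a⁻ₓ) - h Σₓ (ρₓ - ½) + λ Σₓᵧ v(x-y)(ρₓ - ½)(ρᵧ - ½)`. -/
noncomputable def hamiltonian {L n : ℕ} [NeZero L] (h lam : ℝ) (v : ℤ → ℝ)
    (ap am : ZMod L → Matrix (Fin n) (Fin n) ℂ) : Matrix (Fin n) (Fin n) ℂ :=
  -((1 / 2 : ℂ) • ∑ x : ZMod L, (ap x * am (x + 1) + ap (x + 1) * am x))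
    - (h : ℂ) • ∑ x : ZMod L, (rho ap am x - (1 / 2 : ℂ) • 1)
    + (lam : ℂ) • ∑ x : ZMod L, ∑ y : ZMod L,
        ((v ((x.val : ℤ) - (y.val : ℤ)) : ℝ) : ℂ) •
          ((rho ap am x - (1 / 2 : ℂ) • 1) * (rho ap am y - (1 / 2 : ℂ) • 1))

/-- The lattice current `Jₓ = (1/2i)(a⁺ₓ₊₁ a⁻ₓ - a⁺ₓ a⁻ₓ₊₁)`. -/
noncomputable def latticeCurrent {L n : ℕ} (ap am : ZMod L → Matrix (Fin n) (Fin n) ℂ)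
    (x : ZMod L) : Matrix (Fin n) (Fin n) ℂ :=
  (1 / (2 * Complex.I)) • (ap (x + 1) * am x - ap x * am (x + 1))

private lemma reduce_comm {M : Type*} [Ring M] (A B C R : M) (hB : B * R = R * B)
    (hC : C * R = R * C) :
    (-A - B + C) * R - R * (-A - B + C) = -(A * R - R * A) := by
  simp only [sub_mul, add_mul, mul_sub, mul_add, neg_mul, mul_neg, hB, hC]
  abel

private lemma car_gen {R : Type*} [Ring R] [Algebra ℂ R] (P Q M N : R) (d1 d2 : ℂ)
    (e1 : N * Q = d1 • 1 - Q * N)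
    (e2 : P * Q = -(Q * P))
    (e3 : N * M = -(M * N))
    (e4 : P * M = d2 • 1 - M * P) :
    P * N * (Q * M) - Q * M * (P * N) = d1 • (P * M) - d2 • (Q * N) := by
  have s1 : P * N * (Q * M) = P * (N * Q) * M := by noncomm_ring
  rw [e1] at s1
  have s2 : P * (d1 • 1 - Q * N) * M = d1 • (P * M) - P * Q * (N * M) := by
    simp [mul_sub, sub_mul, mul_smul_comm, smul_mul_assoc, mul_assoc]
  rw [e2, e3] at s2
  have s3 : -(Q * P) * -(M * N) = Q * (P * M) * N := by noncomm_ring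
  rw [e4] at s3
  have s4 : Q * (d2 • 1 - M * P) * N = d2 • (Q * N) - Q * M * (P * N) := by
    simp [mul_sub, sub_mul, mul_smul_comm, smul_mul_assoc, mul_assoc]
  rw [s1, s2, s3, s4]
  abel

section Aux
variable {L n : ℕ} (ap am : ZMod L → Matrix (Fin n) (Fin n) ℂ)
variable (hcar1 : ∀ x y, am x * ap y + ap y * am x = if x = y then 1 else 0)
variable (hcar2 : ∀ x y, ap x * ap y + ap y * ap x = 0)
variable (hcar3 : ∀ x y, am x * am y + am y * am x = 0)

include hcar1 hcar2 hcar3 in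
private lemma car_key (a b c : ZMod L) :
    ap a * am b * (ap c * am c) - ap c * am c * (ap a * am b)
      = (if b = c then (1:ℂ) else 0) • (ap a * am c)
        - (if a = c then (1:ℂ) else 0) • (ap c * am b) := by
  apply car_gen
  · rw [eq_sub_iff_add_eq, hcar1 b c]; split <;> simp
  · exact eq_neg_of_add_eq_zero_left (hcar2 a c)
  · exact eq_neg_of_add_eq_zero_left (hcar3 b c)
  · rw [eq_sub_iff_add_eq, add_comm, hcar1 c a]
    by_cases h : a = c <;> simp [h, eq_comm]

include hcar1 hcar2 hcar3 in
private lemma rho_commute (y x : ZMod L) : Commute (rho ap am y) (rho ap am x) := by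
  have hk := car_key ap am hcar1 hcar2 hcar3 y y x
  unfold Commute SemiconjBy rho
  apply sub_eq_zero.mp
  rw [hk]
  by_cases h : y = x <;> simp [h]

end Aux

/-- Lattice continuity equation: for operators satisfying the canonical
anticommutation relations, the Hamiltonian `H` with periodic boundary conditions satisfies
`[H, ρₓ] = -i (Jₓ - J_{x-1})` for every site `x ∈ ℤ/Lℤ`. -/
theorem lattice_continuity_equation (L n : ℕ) [NeZero L] (hL : 2 ≤ L) (h lam : ℝ)
    (v : ℤ → ℝ) (hv : ∀ m, v (-m) = v m)
    (ap am : ZMod L → Matrix (Fin n) (Fin n) ℂ)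
    (hcar1 : ∀ x y, am x * ap y + ap y * am x = if x = y then 1 else 0)
    (hcar2 : ∀ x y, ap x * ap y + ap y * ap x = 0)
    (hcar3 : ∀ x y, am x * am y + am y * am x = 0)
    (x : ZMod L) :
    hamiltonian h lam v ap am * rho ap am x - rho ap am x * hamiltonian h lam v ap am
      = (-Complex.I) • (latticeCurrent ap am x - latticeCurrent ap am (x - 1)) := by
  have hR : rho ap am x = ap x * am x := rfl
  have hrc : ∀ y, Commute (rho ap am y) (rho ap am x) := fun y => rho_commute ap am hcar1 hcar2 hcar3 y x
  have hone : ∀ y, Commute (rho ap am y - (1/2 : ℂ) • 1) (rho ap am x) := fun y =>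
    (hrc y).sub_left (((Commute.one_left _).smul_left _))
  -- the field term and interaction term commute with R
  have hB : Commute ((h : ℂ) • ∑ y : ZMod L, (rho ap am y - (1/2 : ℂ) • 1)) (rho ap am x) := by
    exact (Commute.sum_left _ _ _ fun y _ => hone y).smul_left _
  have hC : Commute ((lam : ℂ) • ∑ y : ZMod L, ∑ z : ZMod L,
      ((v ((y.val : ℤ) - (z.val : ℤ)) : ℝ) : ℂ) •
        ((rho ap am y - (1/2 : ℂ) • 1) * (rho ap am z - (1/2 : ℂ) • 1))) (rho ap am x) := by
    refine Commute.smul_left ?_ _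
    refine Commute.sum_left _ _ _ fun y _ => ?_
    refine Commute.sum_left _ _ _ fun z _ => ?_
    exact (((hone y).mul_left (hone z))).smul_left _
  -- reduce to the hopping term
  set S := ∑ y : ZMod L, (ap y * am (y + 1) + ap (y + 1) * am y) with hS
  have hred : hamiltonian h lam v ap am * rho ap am x - rho ap am x * hamiltonian h lam v ap am
      = -((1/2 : ℂ) • (S * rho ap am x - rho ap am x * S)) := by
    rw [hamiltonian, reduce_comm _ _ _ _ hB.eq hC.eq, ← hS]
    rw [smul_mul_assoc, mul_smul_comm, smul_sub]
  -- compute the hopping commutator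
  have hcomm : S * rho ap am x - rho ap am x * S = ∑ y : ZMod L,
      ((ap y * am (y + 1) + ap (y + 1) * am y) * rho ap am x
        - rho ap am x * (ap y * am (y + 1) + ap (y + 1) * am y)) := by
    rw [hS, Finset.sum_mul, Finset.mul_sum, ← Finset.sum_sub_distrib]
  have hterm : ∀ y : ZMod L,
      (ap y * am (y + 1) + ap (y + 1) * am y) * rho ap am x
        - rho ap am x * (ap y * am (y + 1) + ap (y + 1) * am y)
      = ((if y + 1 = x then (1:ℂ) else 0) • (ap y * am x)
          - (if y = x then (1:ℂ) else 0) • (ap x * am (y + 1)))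
        + ((if y = x then (1:ℂ) else 0) • (ap (y + 1) * am x)
          - (if y + 1 = x then (1:ℂ) else 0) • (ap x * am y)) := by
    intro y
    have k1 := car_key ap am hcar1 hcar2 hcar3 y (y + 1) x
    have k2 := car_key ap am hcar1 hcar2 hcar3 (y + 1) y x
    rw [hR, add_mul, mul_add]
    calc ap y * am (y+1) * (ap x * am x) + ap (y+1) * am y * (ap x * am x)
          - (ap x * am x * (ap y * am (y+1)) + ap x * am x * (ap (y+1) * am y))
        = (ap y * am (y+1) * (ap x * am x) - ap x * am x * (ap y * am (y+1)))
          + (ap (y+1) * am y * (ap x * am x) - ap x * am x * (ap (y+1) * am y)) := by abel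
      _ = _ := by rw [k1, k2]
  have hsum : S * rho ap am x - rho ap am x * S
      = (ap (x - 1) * am x - ap x * am (x + 1))
        + (ap (x + 1) * am x - ap x * am (x - 1)) := by
    rw [hcomm]
    simp only [hterm]
    rw [Finset.sum_add_distrib, Finset.sum_sub_distrib, Finset.sum_sub_distrib]
    simp only [show ∀ y : ZMod L, (y + 1 = x) = (y = x - 1) by
      intro y; rw [eq_iff_iff, eq_sub_iff_add_eq]]
    simp [ite_smul, sub_add_cancel]
  -- final scalar arithmetic
  have hI : -Complex.I * (1/(2*Complex.I)) = -(1/2 : ℂ) := by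
    have h2 : (2*Complex.I) ≠ 0 := by simp [Complex.I_ne_zero]
    field_simp
  rw [hred, hsum]
  rw [latticeCurrent, latticeCurrent, sub_add_cancel, ← smul_sub, smul_smul, hI]
  rw [← neg_smul, neg_smul, neg_smul]
  congr 1
  congr 1
  abel
end

section
/- For every real e₀ ≠ 0, the function k₀ ↦ 1/(−ik₀ + e₀)² is Lebesgue integrable on ℝ and ∫_{ℝ} dk₀ /(−ik₀ + e₀)² = 0. -/
open Complex MeasureTheory Filter

lemma symbol_ne_zero (e₀ : ℝ) (he : e₀ ≠ 0) (k : ℝ) : -I * (k : ℂ) + (e₀ : ℂ) ≠ 0 := by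
  intro h
  have : ((-I * (k : ℂ) + (e₀ : ℂ)).re : ℝ) = 0 := by rw [h]; simp
  simp at this
  exact he this

lemma symbol_norm (e₀ : ℝ) (k : ℝ) : ‖-I * (k : ℂ) + (e₀ : ℂ)‖ = Real.sqrt (k ^ 2 + e₀ ^ 2) := by
  rw [Complex.norm_def, Complex.normSq_apply]
  congr 1
  simp [Complex.add_re, Complex.add_im, Complex.mul_re, Complex.mul_im]
  ring

lemma symbol_integrable (e₀ : ℝ) (he : e₀ ≠ 0) :
    Integrable (fun k₀ : ℝ => 1 / (-I * (k₀ : ℂ) + (e₀ : ℂ)) ^ 2) := by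
  have hC : (0:ℝ) < min 1 (e₀ ^ 2) := lt_min one_pos (by positivity)
  apply Integrable.mono' (((integrable_inv_one_add_sq).const_mul (min 1 (e₀ ^ 2))⁻¹))
  · apply Continuous.aestronglyMeasurable
    apply Continuous.div continuous_const
    · exact (continuous_const.mul Complex.continuous_ofReal |>.add continuous_const).pow 2
    · intro k
      exact pow_ne_zero 2 (symbol_ne_zero e₀ he k)
  · filter_upwards with k
    have hne := symbol_ne_zero e₀ he k
    have hnorm : ‖(-I * (k : ℂ) + (e₀ : ℂ)) ^ 2‖ = k ^ 2 + e₀ ^ 2 := by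
      rw [norm_pow, symbol_norm, Real.sq_sqrt (by positivity)]
    rw [norm_div, norm_one, hnorm, one_div]
    have key : min 1 (e₀ ^ 2) * (1 + k ^ 2) ≤ k ^ 2 + e₀ ^ 2 := by
      nlinarith [min_le_left 1 (e₀ ^ 2), min_le_right 1 (e₀ ^ 2), sq_nonneg k, hC.le]
    calc (k ^ 2 + e₀ ^ 2)⁻¹ ≤ (min 1 (e₀ ^ 2) * (1 + k ^ 2))⁻¹ := by
          exact inv_anti₀ (by positivity) key
      _ = (min 1 (e₀ ^ 2))⁻¹ * (1 + k ^ 2)⁻¹ := by rw [mul_inv]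

lemma symbol_tendsto (e₀ : ℝ) (l : Filter ℝ) (hl : Tendsto (fun k : ℝ => |k|) l atTop) :
    Tendsto (fun k : ℝ => -I / (-I * (k : ℂ) + (e₀ : ℂ))) l (nhds 0) := by
  have h : Tendsto (fun k : ℝ => (-I * (k : ℂ) + (e₀ : ℂ))⁻¹) l (nhds 0) := by
    rw [tendsto_zero_iff_norm_tendsto_zero]
    simp only [norm_inv]
    apply Tendsto.inv_tendsto_atTop
    apply tendsto_atTop_mono (fun k => ?_) hl
    rw [symbol_norm, ← Real.sqrt_sq_eq_abs]
    exact Real.sqrt_le_sqrt (by nlinarith [sq_nonneg e₀])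
  have := h.const_mul (-I)
  simpa [div_eq_mul_inv] using this

/-- For every real `e₀ ≠ 0`, the function `k₀ ↦ 1/(-i k₀ + e₀)²` is
Lebesgue integrable on `ℝ` and its integral over `ℝ` vanishes. -/
theorem integral_inv_sq_symbol (e₀ : ℝ) (he : e₀ ≠ 0) :
    Integrable (fun k₀ : ℝ => 1 / (-I * (k₀ : ℂ) + (e₀ : ℂ)) ^ 2) ∧
    ∫ k₀ : ℝ, 1 / (-I * (k₀ : ℂ) + (e₀ : ℂ)) ^ 2 = 0 := by
  have hint := symbol_integrable e₀ he
  refine ⟨hint, ?_⟩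
  have hderiv : ∀ k : ℝ, HasDerivAt (fun k : ℝ => -I / (-I * (k : ℂ) + (e₀ : ℂ)))
      (1 / (-I * (k : ℂ) + (e₀ : ℂ)) ^ 2) k := by
    intro k
    have hne := symbol_ne_zero e₀ he k
    have hg : HasDerivAt (fun k : ℝ => -I * (k : ℂ) + (e₀ : ℂ)) (-I) k := by
      simpa using ((Complex.ofRealCLM.hasDerivAt (x := k)).const_mul (-I)).add_const (e₀ : ℂ)
    have := (hasDerivAt_const k (-I : ℂ)).fun_div hg hne
    refine this.congr_deriv ?_
    simp
  have h0 := integral_of_hasDerivAt_of_tendsto hderiv hint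
    (symbol_tendsto e₀ atBot (by simpa using tendsto_abs_atBot_atTop))
    (symbol_tendsto e₀ atTop (by simpa using tendsto_abs_atTop_atTop))
  simpa using h0
end

section
/- Vanishing of the chiral bubble at zero momentum: let v_s > 0, ω ∈ {+1,−1}, and let f : ℝ → ℝ be a bounded measurable function vanishing outside of some annulus 0 < r ≤ √(k₀² + v_s²k²) ≤ R < ∞. Define ĝ_ω(k, k₀) = f(√(k₀² + v_s²k²))/(−ik₀ + ω v_s k). Then ĝ_ω² is integrable on ℝ² and ∫_{ℝ²} ĝ_ω(k, k₀)² dk dk₀ = 0. -/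
open Complex MeasureTheory

noncomputable def chiralT (v : ℝ) (hv : v ≠ 0) : (ℝ × ℝ) ≃ₗ[ℝ] (ℝ × ℝ) where
  toFun p := (-p.2 / v, v * p.1)
  invFun p := (p.2 / v, -(v * p.1))
  map_add' p q := by simp [Prod.ext_iff]; ring_nf; simp [add_div]
  map_smul' c p := by simp [Prod.ext_iff]; constructor <;> ring
  left_inv p := by simp [Prod.ext_iff]; constructor <;> field_simp
  right_inv p := by simp [Prod.ext_iff]; constructor <;> field_simp

lemma chiralT_comp (v : ℝ) (hv : v ≠ 0) :
    ((chiralT v hv).toLinearMap).comp (chiralT v hv).toLinearMap = -LinearMap.id := by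
  apply LinearMap.ext; intro p
  simp [chiralT, Prod.ext_iff]
  constructor <;> field_simp <;> ring

lemma chiralT_det_abs (v : ℝ) (hv : v ≠ 0) :
    |LinearMap.det (chiralT v hv).toLinearMap| = 1 := by
  have h1 : LinearMap.det (((chiralT v hv).toLinearMap).comp (chiralT v hv).toLinearMap)
      = LinearMap.det (chiralT v hv).toLinearMap * LinearMap.det (chiralT v hv).toLinearMap :=
    LinearMap.det_comp _ _
  rw [chiralT_comp v hv] at h1
  have h2 : LinearMap.det (-(LinearMap.id : (ℝ × ℝ) →ₗ[ℝ] (ℝ × ℝ))) = 1 := by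
    rw [← neg_one_smul ℝ (LinearMap.id : (ℝ × ℝ) →ₗ[ℝ] (ℝ × ℝ)), LinearMap.det_smul]
    norm_num [Module.finrank_prod]
  rw [h2] at h1
  have h3 : |LinearMap.det (chiralT v hv).toLinearMap| *
      |LinearMap.det (chiralT v hv).toLinearMap| = 1 := by
    rw [← abs_mul, ← h1]; norm_num
  rcases mul_self_eq_one_iff.mp h3 with h | h
  · exact h
  · have h4 := abs_nonneg (LinearMap.det (chiralT v hv).toLinearMap)
    rw [h] at h4; linarith

lemma chiralT_measurePreserving (v : ℝ) (hv : v ≠ 0) :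
    MeasurePreserving (fun p : ℝ × ℝ => (-p.2 / v, v * p.1))
      (volume : Measure (ℝ × ℝ)) volume := by
  have hdet : LinearMap.det (chiralT v hv).toLinearMap ≠ 0 := by
    intro h
    have := chiralT_det_abs v hv
    rw [h] at this; norm_num at this
  constructor
  · exact (measurable_snd.neg.div_const v).prodMk (measurable_fst.const_mul v)
  · have := Measure.map_linearMap_addHaar_eq_smul_addHaar
      (volume : Measure (ℝ × ℝ)) hdet
    have habs : |(LinearMap.det (chiralT v hv).toLinearMap)⁻¹| = 1 := by
      rw [abs_inv, chiralT_det_abs v hv]; norm_num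
    rw [habs] at this
    exact (by simpa using this : Measure.map (⇑(chiralT v hv)) volume = volume)


/-- Vanishing of the chiral bubble at zero momentum: for `v_s > 0`, `ω = ±1`
and `f : ℝ → ℝ` bounded, measurable and vanishing outside an annulus
`0 < r ≤ √(k₀² + v_s² k²) ≤ R`, the square of the propagator
`ĝ_ω(k, k₀) = f(√(k₀² + v_s² k²)) / (-i k₀ + ω v_s k)` is integrable on `ℝ²` and its
integral vanishes. -/
theorem chiral_bubble_vanishes (v_s : ℝ) (hv : 0 < v_s) (ω : ℝ) (hω : ω = 1 ∨ ω = -1)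
    (f : ℝ → ℝ) (hf : Measurable f) (C : ℝ) (hbd : ∀ t, |f t| ≤ C)
    (r R : ℝ) (hr : 0 < r) (hrR : r ≤ R)
    (hsupp : ∀ t : ℝ, t ∉ Set.Icc r R → f t = 0) :
    Integrable (fun k : ℝ × ℝ =>
        ((f (Real.sqrt (k.2 ^ 2 + v_s ^ 2 * k.1 ^ 2)) : ℂ) /
          (-I * (k.2 : ℂ) + (ω : ℂ) * v_s * k.1)) ^ 2) ∧
    ∫ k : ℝ × ℝ,
        ((f (Real.sqrt (k.2 ^ 2 + v_s ^ 2 * k.1 ^ 2)) : ℂ) /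
          (-I * (k.2 : ℂ) + (ω : ℂ) * v_s * k.1)) ^ 2 = 0 := by
  have hvne : v_s ≠ 0 := ne_of_gt hv
  set F : ℝ × ℝ → ℂ := fun k =>
      ((f (Real.sqrt (k.2 ^ 2 + v_s ^ 2 * k.1 ^ 2)) : ℂ) /
        (-I * (k.2 : ℂ) + (ω : ℂ) * v_s * k.1)) ^ 2 with hFdef
  have hω2 : ω ^ 2 = 1 := by rcases hω with h | h <;> simp [h]
  have hωC : (ω : ℂ) ^ 2 = 1 := by exact_mod_cast hω2
  have hC0 : (0:ℝ) ≤ C := le_trans (abs_nonneg _) (hbd 0)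
  -- measurability
  have hmF : Measurable F := by
    apply Measurable.pow_const
    apply Measurable.div
    · exact Complex.measurable_ofReal.comp (hf.comp
        (Real.continuous_sqrt.measurable.comp
          ((measurable_snd.pow_const 2).add ((measurable_fst.pow_const 2).const_mul _))))
    · exact (by fun_prop : Continuous fun k : ℝ × ℝ =>
        -I * (k.2 : ℂ) + (ω : ℂ) * v_s * k.1).measurable
  -- norm of the denominator
  have hden : ∀ p : ℝ × ℝ, ‖-I * (p.2 : ℂ) + (ω : ℂ) * v_s * p.1‖ ^ 2
      = p.2 ^ 2 + v_s ^ 2 * p.1 ^ 2 := by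
    intro p
    rw [Complex.sq_norm, Complex.normSq_apply]
    simp
    nlinarith [hω2]
  -- uniform bound
  have hnorm : ∀ p : ℝ × ℝ, ‖F p‖ ≤ (C / r) ^ 2 := by
    intro p
    set t := Real.sqrt (p.2 ^ 2 + v_s ^ 2 * p.1 ^ 2) with ht
    by_cases hft : f t = 0
    · simp [hFdef, ← ht, hft]
      positivity
    · have htI : t ∈ Set.Icc r R := by
        by_contra h; exact hft (hsupp t h)
      have ht0 : 0 ≤ t := Real.sqrt_nonneg _
      have hargnn : (0:ℝ) ≤ p.2 ^ 2 + v_s ^ 2 * p.1 ^ 2 := by positivity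
      have hdsq : ‖-I * (p.2 : ℂ) + (ω : ℂ) * v_s * p.1‖ ^ 2 = t ^ 2 := by
        rw [hden p, ht, Real.sq_sqrt hargnn]
      have hd : ‖-I * (p.2 : ℂ) + (ω : ℂ) * v_s * p.1‖ = t := by
        rw [← Real.sqrt_sq (norm_nonneg _), hdsq, Real.sqrt_sq ht0]
      have : ‖F p‖ = (|f t| / t) ^ 2 := by
        rw [hFdef]
        simp only [norm_pow, norm_div, hd, Complex.norm_real, Real.norm_eq_abs, ← ht]
      rw [this]
      have h1 : |f t| / t ≤ C / r :=
        div_le_div₀ hC0 (hbd t) hr htI.1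
      exact pow_le_pow_left₀ (by positivity) h1 2
  -- support in a finite-measure set
  set S : Set (ℝ × ℝ) := Set.Icc (-(R / v_s)) (R / v_s) ×ˢ Set.Icc (-R) R with hSdef
  have hScompact : IsCompact S := isCompact_Icc.prod isCompact_Icc
  have hSmeas : MeasurableSet S := hScompact.measurableSet
  have hRpos : (0:ℝ) < R := lt_of_lt_of_le hr hrR
  have hFS : ∀ p : ℝ × ℝ, p ∉ S → F p = 0 := by
    intro p hp
    set t := Real.sqrt (p.2 ^ 2 + v_s ^ 2 * p.1 ^ 2) with ht
    have hargnn : (0:ℝ) ≤ p.2 ^ 2 + v_s ^ 2 * p.1 ^ 2 := by positivity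
    have htR : R < t := by
      rw [hSdef, Set.mem_prod, not_and_or] at hp
      have hRlt : R ^ 2 < p.2 ^ 2 + v_s ^ 2 * p.1 ^ 2 := by
        rcases hp with h | h
        · have h1 : R / v_s < |p.1| := by
            by_contra hc
            exact h (Set.mem_Icc.2 (abs_le.1 (not_lt.1 hc)))
          rw [div_lt_iff₀ hv] at h1
          nlinarith [sq_nonneg p.2, abs_nonneg p.1, _root_.sq_abs p.1, hRpos]
        · have h1 : R < |p.2| := by
            by_contra hc
            exact h (Set.mem_Icc.2 (abs_le.1 (not_lt.1 hc)))
          nlinarith [sq_nonneg p.1, _root_.sq_abs p.2, abs_nonneg p.2, hRpos, sq_nonneg (v_s * p.1)]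
      calc R = Real.sqrt (R ^ 2) := (Real.sqrt_sq hRpos.le).symm
        _ < t := by rw [ht]; exact Real.sqrt_lt_sqrt (by positivity) hRlt
    have : f t = 0 := hsupp t (by simp [Set.mem_Icc]; intro h1; linarith)
    simp [hFdef, ← ht, this]
  -- integrability
  have hInt : Integrable F := by
    have hFind : F = S.indicator F := by
      funext p
      by_cases hp : p ∈ S
      · simp [hp]
      · simp [Set.indicator_of_notMem hp, hFS p hp]
    rw [hFind, integrable_indicator_iff hSmeas]
    exact Measure.integrableOn_of_bounded hScompact.measure_lt_top.ne
      hmF.aestronglyMeasurable (ae_of_all _ fun p => hnorm p)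
  refine ⟨hInt, ?_⟩
  -- symmetry argument
  have hemb : MeasurableEmbedding (fun p : ℝ × ℝ => (-p.2 / v_s, v_s * p.1)) :=
    (chiralT v_s hvne).toContinuousLinearEquiv.toHomeomorph.measurableEmbedding
  have hci : ∫ p : ℝ × ℝ, F (-p.2 / v_s, v_s * p.1) = ∫ p : ℝ × ℝ, F p :=
    (chiralT_measurePreserving v_s hvne).integral_comp hemb F
  have hneg : ∀ p : ℝ × ℝ, F (-p.2 / v_s, v_s * p.1) = -F p := by
    intro p
    have harg : (v_s * p.1) ^ 2 + v_s ^ 2 * (-p.2 / v_s) ^ 2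
        = p.2 ^ 2 + v_s ^ 2 * p.1 ^ 2 := by
      field_simp; ring
    have hD : (-I * ((v_s * p.1 : ℝ) : ℂ) + (ω : ℂ) * v_s * ((-p.2 / v_s : ℝ) : ℂ))
        = (-I * ω) * (-I * (p.2 : ℂ) + (ω : ℂ) * v_s * (p.1 : ℂ)) := by
      have hvC : (v_s : ℂ) ≠ 0 := by exact_mod_cast hvne
      push_cast
      have hq : (-(p.2 : ℂ) / (v_s : ℂ)) * (v_s : ℂ) = -(p.2 : ℂ) := div_mul_cancel₀ _ hvC
      linear_combination (I * (v_s : ℂ) * (p.1 : ℂ)) * hωC + (ω : ℂ) * hq -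
        ((ω : ℂ) * (p.2 : ℂ)) * Complex.I_sq
    have hsq : ((-I * (ω : ℂ)) * (-I * (p.2 : ℂ) + (ω : ℂ) * v_s * (p.1 : ℂ))) ^ 2
        = -((-I * (p.2 : ℂ) + (ω : ℂ) * v_s * (p.1 : ℂ)) ^ 2) := by
      rw [mul_pow]
      have h1 : (-I * (ω : ℂ)) ^ 2 = -1 := by
        linear_combination (ω : ℂ) ^ 2 * Complex.I_sq - hωC
      rw [h1]; ring
    show ((f (Real.sqrt ((v_s * p.1) ^ 2 + v_s ^ 2 * (-p.2 / v_s) ^ 2)) : ℂ) /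
        (-I * ((v_s * p.1 : ℝ) : ℂ) + (ω : ℂ) * v_s * ((-p.2 / v_s : ℝ) : ℂ))) ^ 2 = -F p
    rw [harg, hD, div_pow, hsq, div_neg, ← div_pow]
  have hx : ∫ p : ℝ × ℝ, F p = -∫ p : ℝ × ℝ, F p := by
    conv_lhs => rw [← hci]
    simp_rw [hneg]
    rw [integral_neg]
  have h2x : (2 : ℂ) * ∫ p : ℝ × ℝ, F p = 0 := by
    linear_combination hx
  have := mul_eq_zero.mp h2x
  rcases this with h | h
  · norm_num at h
  · exact h
end
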